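/- If two words w1 and w2 are equal in spaCy, w1 ≠ w2, and j is a position where they differ with all earlier positions ≥ 5 agreeing, then in both words the character class is a letter at position j and positions j−4 through j−1 of w1 all have the same character class as position j of one of the words; i.e., a differing position can only be 'hidden' by shape truncation inside a run of length greater than 4 of a single letter-case class. -/

import Mathlib

/-- A character: uppercase letter, lowercase letter, digit, or special symbol. -/
inductive Ch
  | up (n : ℕ)
  | lo (n : ℕ)
  | dig (n : Fin 10)
  | sp (n : ℕ)
  deriving DecidableEq

/-- Case folding: maps uppercase letters to lowercase ones, identity otherwise. -/
def Ch.lower : Ch → Ch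
  | .up n => .lo n
  | c => c

/-- Shape characters. -/
inductive Sh
  | X | x | d | spec (n : ℕ)
  deriving DecidableEq

/-- Character class of a character. -/
def Ch.shapeChar : Ch → Sh
  | .up _ => .X
  | .lo _ => .x
  | .dig _ => .d
  | .sp n => .spec n

/-- A word is a finite string of characters. -/
abbrev Word := List Ch

/-- The norm of a word: its lowercase form. -/
def Word.norm (w : Word) : Word := w.map Ch.lower

/-- The prefix of a word: its first character. -/
def Word.pre (w : Word) : Word := w.take 1

/-- The suffix of a word: its last 3 characters. -/
def Word.suf (w : Word) : Word := w.drop (w.length - 3)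

/-- Truncate maximal runs of identical shape characters to length at most 4;
`prev` is the current run's character and `k` its number of occurrences so far. -/
def truncAux : Sh → ℕ → List Sh → List Sh
  | _, _, [] => []
  | prev, k, a :: rest =>
    if a = prev then
      (if k < 4 then [a] else []) ++ truncAux a (k + 1) rest
    else
      a :: truncAux a 1 rest

/-- The shape of a word: its character-class string with every maximal run of
identical shape characters truncated to length at most 4. -/
def Word.shape (w : Word) : List Sh :=
  match w.map Ch.shapeChar with
  | [] => []
  | a :: rest => a :: truncAux a 1 rest

/-- Two words are equal in spaCy iff they have the same prefix, suffix, norm and shape. -/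
def spacyEq (w1 w2 : Word) : Prop :=
  w1.pre = w2.pre ∧ w1.suf = w2.suf ∧ w1.norm = w2.norm ∧ w1.shape = w2.shape

/-- A character is a letter. -/
def Ch.IsLetter : Ch → Prop
  | .up _ => True
  | .lo _ => True
  | _ => False


lemma truncAux_cons (p : Sh) (k : ℕ) (a : Sh) (r : List Sh) :
    truncAux p k (a :: r) =
      (if a = p then (if k < 4 then [a] else []) else [a]) ++
        truncAux a (if a = p then k + 1 else 1) r := by
  by_cases h : a = p <;> simp [truncAux, h]

lemma trunc_head_eq {p : Sh} {k : ℕ} {a b : Sh} {r1 r2 : List Sh} (hk : k < 4)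
    (h : truncAux p k (a :: r1) = truncAux p k (b :: r2)) : a = b := by
  rw [truncAux_cons, truncAux_cons] at h
  by_cases ha : a = p <;> by_cases hb : b = p
  · exact ha.trans hb.symm
  · simp [ha, hb, hk] at h; exact ha.trans h.1
  · simp only [ha, hb, if_true, if_false, if_pos, if_neg, not_false_iff, hk] at h
    simp [hk, hb] at h
    exact h.1.trans hb.symm
  · simp [ha, hb] at h; exact h.1

lemma trunc_step {p : Sh} {k : ℕ} {a : Sh} {r1 r2 : List Sh}
    (h : truncAux p k (a :: r1) = truncAux p k (a :: r2)) :
    truncAux a (if a = p then k + 1 else 1) r1 =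
      truncAux a (if a = p then k + 1 else 1) r2 := by
  rw [truncAux_cons, truncAux_cons] at h
  exact List.append_cancel_left h

lemma trunc_eq_of_small (i : ℕ) : ∀ (r1 r2 : List Sh) (p : Sh) (k : ℕ),
    truncAux p k r1 = truncAux p k r2 → ∀ (hl1 : i < r1.length) (hl2 : i < r2.length),
    k + i ≤ 3 → r1[i] = r2[i] := by
  induction i with
  | zero =>
    rintro (_|⟨a,r1⟩) (_|⟨b,r2⟩) p k h hl1 hl2 hk <;> simp at hl1 hl2
    simpa using trunc_head_eq (by omega) h
  | succ n ih =>
    rintro (_|⟨a,r1⟩) (_|⟨b,r2⟩) p k h hl1 hl2 hk <;> simp at hl1 hl2 ⊢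
    have hab : a = b := trunc_head_eq (by omega) h
    subst hab
    exact ih r1 r2 a _ (trunc_step h) (by omega) (by omega) (by rcases eq_or_ne a p with hap|hap <;> simp [hap] <;> omega)

def sts : Sh → ℕ → List Sh → Sh × ℕ
  | p, k, [] => (p, k)
  | p, k, a :: u => sts a (if a = p then k + 1 else 1) u

lemma trunc_append (u : List Sh) : ∀ (p : Sh) (k : ℕ) (r1 r2 : List Sh),
    truncAux p k (u ++ r1) = truncAux p k (u ++ r2) →
    truncAux (sts p k u).1 (sts p k u).2 r1 = truncAux (sts p k u).1 (sts p k u).2 r2 := by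
  induction u with
  | nil => intro p k r1 r2 h; exact h
  | cons a u ih =>
    intro p k r1 r2 h
    simp only [List.cons_append] at h
    exact ih _ _ _ _ (trunc_step h)

lemma trunc_diff {p : Sh} {k : ℕ} {a b : Sh} {r1 r2 : List Sh} (hab : a ≠ b)
    (h : truncAux p k (a :: r1) = truncAux p k (b :: r2)) :
    4 ≤ k ∧ (a = p ∨ b = p) := by
  constructor
  · by_contra hk
    exact hab (trunc_head_eq (by omega) h)
  · by_contra hc
    push_neg at hc
    rw [truncAux_cons, truncAux_cons] at h
    simp [hc.1, hc.2] at h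
    exact hab h.1

lemma sts_le (u : List Sh) : ∀ p k, (sts p k u).2 ≤ k + u.length := by
  induction u with
  | nil => intro p k; simp [sts]
  | cons a u ih =>
    intro p k
    show (sts a (if a = p then k + 1 else 1) u).2 ≤ k + (a :: u).length
    refine le_trans (ih _ _) ?_
    simp only [List.length_cons]
    rcases eq_or_ne a p with hap|hap <;> simp [hap] <;> omega

lemma sts_run (u : List Sh) : ∀ (p0 : Sh) (k0 d : ℕ), d < (sts p0 k0 u).2 → d ≤ u.length →
    (p0 :: u)[u.length - d]? = some (sts p0 k0 u).1 := by
  induction u with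
  | nil =>
    intro p0 k0 d hd hd2
    have hd0 : d = 0 := by simpa using hd2
    subst hd0
    simp [sts]
  | cons a u ih =>
    intro p0 k0 d hd hd2
    by_cases hdu : d ≤ u.length
    · have he : (a::u).length - d = (u.length - d) + 1 := by simp; omega
      rw [he, List.getElem?_cons_succ]
      exact ih a _ d hd hdu
    · have hdeq : d = u.length + 1 := by simp at hd2; omega
      have hk1 : a = p0 := by
        by_contra hne
        have h1 := sts_le u a 1
        simp only [sts, if_neg hne] at hd
        omega
      have hP := ih a (if a = p0 then k0 + 1 else 1) u.length (by
          show u.length < (sts p0 k0 (a :: u)).2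
          omega) le_rfl
      simp only [Nat.sub_self, List.getElem?_cons_zero, Option.some.injEq] at hP
      have he : (a::u).length - d = 0 := by simp [hdeq]
      rw [he, List.getElem?_cons_zero]
      show some p0 = some (sts a (if a = p0 then k0 + 1 else 1) u).1
      rw [← hP, hk1]

lemma shape_eq_cons (w : Word) (c : Sh) (r : List Sh) (h : w.map Ch.shapeChar = c :: r) :
    w.shape = c :: truncAux c 1 r := by
  unfold Word.shape
  rw [h]

lemma map_getElem? (w : Word) (i : ℕ) (hi : i < w.length) :
    (w.map Ch.shapeChar)[i]? = some (Ch.shapeChar (w[i]'hi)) := by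
  rw [List.getElem?_map, List.getElem?_eq_getElem hi, Option.map_some]

theorem spacyEq_diff_hidden_in_long_run (w1 w2 : Word) (h : spacyEq w1 w2)
    (hne : w1 ≠ w2) (j : ℕ) (h1 : j < w1.length) (h2 : j < w2.length)
    (hdiff : w1[j]'h1 ≠ w2[j]'h2)
    (hprev : ∀ (k : ℕ), 4 ≤ k → ∀ (hk : k < j), w1[k]'(by omega) = w2[k]'(by omega)) :
    (Ch.IsLetter (w1[j]'h1) ∧ Ch.IsLetter (w2[j]'h2)) ∧
    (∀ (k : ℕ), j - 4 ≤ k → ∀ (hk : k < j),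
      Ch.shapeChar (w1[k]'(by omega)) = Ch.shapeChar (w1[j]'h1) ∨
      Ch.shapeChar (w1[k]'(by omega)) = Ch.shapeChar (w2[j]'h2)) := by
  obtain ⟨hpre, hsuf, hnorm, hshape⟩ := h
  -- lower forms agree at j
  have hnormj : Ch.lower (w1[j]'h1) = Ch.lower (w2[j]'h2) := by
    have h' : (w1.map Ch.lower)[j]? = (w2.map Ch.lower)[j]? := by
      rw [show w1.map Ch.lower = Word.norm w1 from rfl,
        show w2.map Ch.lower = Word.norm w2 from rfl, hnorm]
    rw [List.getElem?_map, List.getElem?_map, List.getElem?_eq_getElem h1,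
      List.getElem?_eq_getElem h2] at h'
    simpa using h'
  -- the two characters at j form an up/lo pair
  have key : (∃ n, w1[j]'h1 = Ch.up n ∧ w2[j]'h2 = Ch.lo n) ∨
      (∃ n, w1[j]'h1 = Ch.lo n ∧ w2[j]'h2 = Ch.up n) := by
    rcases e1 : w1[j]'h1 with n|n|n|n <;> rcases e2 : w2[j]'h2 with m|m|m|m <;>
      rw [e1, e2] at hnormj hdiff <;> simp_all [Ch.lower]
  have hletters : Ch.IsLetter (w1[j]'h1) ∧ Ch.IsLetter (w2[j]'h2) := by
    rcases key with ⟨n, e1, e2⟩ | ⟨n, e1, e2⟩ <;> rw [e1, e2] <;>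
      exact ⟨trivial, trivial⟩
  refine ⟨hletters, ?_⟩
  -- shape characters at j differ
  have hshdiff : Ch.shapeChar (w1[j]'h1) ≠ Ch.shapeChar (w2[j]'h2) := by
    rcases key with ⟨n, e1, e2⟩ | ⟨n, e1, e2⟩ <;> rw [e1, e2] <;> simp [Ch.shapeChar]
  -- set up shape strings
  have hlen : w1.length = w2.length := by
    have := congrArg List.length hnorm
    simpa [Word.norm] using this
  have hl1 : (w1.map Ch.shapeChar).length = w1.length := List.length_map _
  have hl2 : (w2.map Ch.shapeChar).length = w2.length := List.length_map _
  obtain ⟨c1, r1, e1⟩ := List.exists_cons_of_ne_nil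
    (show w1.map Ch.shapeChar ≠ [] by intro hc; rw [hc] at hl1; simp at hl1; omega)
  obtain ⟨c2, r2, e2⟩ := List.exists_cons_of_ne_nil
    (show w2.map Ch.shapeChar ≠ [] by intro hc; rw [hc] at hl2; simp at hl2; omega)
  have hsh : c1 :: truncAux c1 1 r1 = c2 :: truncAux c2 1 r2 := by
    rw [← shape_eq_cons w1 c1 r1 e1, ← shape_eq_cons w2 c2 r2 e2, hshape]
  have hc12 : c1 = c2 := by injection hsh
  subst hc12
  have htr : truncAux c1 1 r1 = truncAux c1 1 r2 := by injection hsh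
  -- lengths of tails
  have hr1 : r1.length = w1.length - 1 := by
    have := congrArg List.length e1; simp at this; omega
  have hr2 : r2.length = w2.length - 1 := by
    have := congrArg List.length e2; simp at this; omega
  -- getElem? facts
  have hr1g : ∀ (i : ℕ) (hi : i + 1 < w1.length),
      r1[i]? = some (Ch.shapeChar (w1[i+1]'hi)) := by
    intro i hi
    have h' := map_getElem? w1 (i+1) hi
    rw [e1, List.getElem?_cons_succ] at h'
    exact h'
  have hr2g : ∀ (i : ℕ) (hi : i + 1 < w2.length),
      r2[i]? = some (Ch.shapeChar (w2[i+1]'hi)) := by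
    intro i hi
    have h' := map_getElem? w2 (i+1) hi
    rw [e2, List.getElem?_cons_succ] at h'
    exact h'
  have h01 : 0 < w1.length := by omega
  have h02 : 0 < w2.length := by omega
  have hc1e : c1 = Ch.shapeChar (w1[0]'h01) := by
    have h' := map_getElem? w1 0 h01
    rw [e1, List.getElem?_cons_zero] at h'
    exact Option.some.inj h'
  have hc2e : c1 = Ch.shapeChar (w2[0]'h02) := by
    have h' := map_getElem? w2 0 h02
    rw [e2, List.getElem?_cons_zero] at h'
    exact Option.some.inj h'
  -- agreement of shape chars strictly before j
  have hagree : ∀ (i : ℕ), i + 1 < j → r1[i]? = r2[i]? := by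
    intro i hij
    have hi1 : i + 1 < w1.length := by omega
    have hi2 : i + 1 < w2.length := by omega
    have hb1 : i < r1.length := by omega
    have hb2 : i < r2.length := by omega
    by_cases hi3 : i + 1 ≤ 3
    · rw [List.getElem?_eq_getElem hb1, List.getElem?_eq_getElem hb2,
        trunc_eq_of_small i r1 r2 c1 1 htr hb1 hb2 (by omega)]
    · rw [hr1g i hi1, hr2g i hi2, hprev (i+1) (by omega) hij]
  -- j is at least 4
  have hj4 : 4 ≤ j := by
    by_contra hj
    push_neg at hj
    apply hshdiff
    rcases Nat.eq_zero_or_pos j with hj0 | hj0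
    · subst hj0
      rw [← hc1e, ← hc2e]
    · obtain ⟨i, rfl⟩ : ∃ i, j = i + 1 := ⟨j - 1, by omega⟩
      have q1 : r1[i]'(by omega) = Ch.shapeChar (w1[i+1]'h1) := by
        have h' := hr1g i h1
        rw [List.getElem?_eq_getElem (by omega : i < r1.length)] at h'
        exact Option.some.inj h'
      have q2 : r2[i]'(by omega) = Ch.shapeChar (w2[i+1]'h2) := by
        have h' := hr2g i h2
        rw [List.getElem?_eq_getElem (by omega : i < r2.length)] at h'
        exact Option.some.inj h'
      rw [← q1, ← q2]
      exact trunc_eq_of_small i r1 r2 c1 1 htr (by omega) (by omega) (by omega)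
  obtain ⟨jp, rfl⟩ : ∃ jp, j = jp + 1 := ⟨j - 1, by omega⟩
  -- the common prefix u of the tails up to position jp
  set u := r1.take jp with hu
  have hul : u.length = jp := by rw [hu, List.length_take]; omega
  have hu2 : r2.take jp = u := by
    apply List.ext_getElem?
    intro n
    by_cases hn : n < jp
    · rw [List.getElem?_take_of_lt hn, hu, List.getElem?_take_of_lt hn]
      exact (hagree n (by omega)).symm
    · rw [List.getElem?_eq_none (by simp [List.length_take]; omega),
        List.getElem?_eq_none (by omega)]
  have hsplit1 : r1 = u ++ r1.drop jp := (List.take_append_drop _ _).symm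
  have hsplit2 : r2 = u ++ r2.drop jp := by
    rw [← hu2]; exact (List.take_append_drop _ _).symm
  have htr' := htr
  rw [hsplit1, hsplit2] at htr'
  have hmain := trunc_append u c1 1 _ _ htr'
  have hb1 : jp < r1.length := by omega
  have hb2 : jp < r2.length := by omega
  have hd1 : r1.drop jp = (r1[jp]'hb1) :: r1.drop (jp+1) := List.drop_eq_getElem_cons hb1
  have hd2 : r2.drop jp = (r2[jp]'hb2) :: r2.drop (jp+1) := List.drop_eq_getElem_cons hb2
  rw [hd1, hd2] at hmain
  have ha1 : r1[jp]'hb1 = Ch.shapeChar (w1[jp+1]'h1) := by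
    have h' := hr1g jp h1
    rw [List.getElem?_eq_getElem hb1] at h'
    exact Option.some.inj h'
  have ha2 : r2[jp]'hb2 = Ch.shapeChar (w2[jp+1]'h2) := by
    have h' := hr2g jp h2
    rw [List.getElem?_eq_getElem hb2] at h'
    exact Option.some.inj h'
  have hab : r1[jp]'hb1 ≠ r2[jp]'hb2 := by
    rw [ha1, ha2]; exact hshdiff
  obtain ⟨hK, hPab⟩ := trunc_diff hab hmain
  -- finish
  intro k hk1 hk2
  have hd : jp - k < (sts c1 1 u).2 := by omega
  have hdu : jp - k ≤ u.length := by omega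
  have hrun := sts_run u c1 1 (jp - k) hd hdu
  have hki : u.length - (jp - k) = k := by omega
  rw [hki] at hrun
  have hkw : k < w1.length := by omega
  have hcu : (c1 :: u)[k]? = some (Ch.shapeChar (w1[k]'hkw)) := by
    rcases Nat.eq_zero_or_pos k with rfl | hk0
    · rw [List.getElem?_cons_zero, hc1e]
    · obtain ⟨m, rfl⟩ : ∃ m, k = m + 1 := ⟨k - 1, by omega⟩
      have hmw : m + 1 < w1.length := by omega
      have hmr : m < jp := by omega
      calc (c1 :: u)[m+1]? = u[m]? := List.getElem?_cons_succ
        _ = r1[m]? := List.getElem?_take_of_lt hmr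
        _ = some (Ch.shapeChar (w1[m+1]'hmw)) := hr1g m hmw
  rw [hcu] at hrun
  have hkP : Ch.shapeChar (w1[k]'hkw) = (sts c1 1 u).1 := Option.some.inj hrun
  rcases hPab with hPa | hPb
  · left
    rw [hkP, ← hPa]
    exact ha1
  · right
    rw [hkP, ← hPb]
    exact ha2
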